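/- Let n ≥ 3, S ∈ (0, 2π], and T ∈ (0, n sin(S/n)]. If (θ₁, ..., θₙ) with 0 ≤ θ₁ ≤ ⋯ ≤ θₙ ≤ π, ∑θᵢ = S, and ∑ sin θᵢ = T maximizes ∑ sin(θᵢ/2) over this constraint set, then either θ₁ = 0 or θ₂ = θ₃ = ⋯ = θₙ. -/

import Mathlib

open Real Filter

noncomputable def gF (a b c : ℝ) : ℝ → ℝ :=
  fun w => (Real.sin a + Real.sin b + Real.sin c - Real.sin w) / (2 * Real.sin ((a+b+c-w)/2))

noncomputable def PhiF (a b c : ℝ) : ℝ → ℝ :=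
  fun w => Real.sin (w/2) + 2 * Real.sin ((a+b+c-w)/4) * Real.sqrt ((1 + gF a b c w)/2)

lemma sinsum (p q : ℝ) : Real.sin p + Real.sin q = 2 * Real.sin ((p+q)/2) * Real.cos ((p-q)/2) := by
  have h1 := Real.sin_add ((p+q)/2) ((p-q)/2)
  have h2 := Real.sin_sub ((p+q)/2) ((p-q)/2)
  rw [show (p+q)/2 + (p-q)/2 = p by ring] at h1
  rw [show (p+q)/2 - (p-q)/2 = q by ring] at h2
  rw [h1, h2]; ring

lemma deriv_neg_eventually_gt {f : ℝ → ℝ} {c F' : ℝ} (hf : HasDerivAt f F' c) (hneg : F' < 0) :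
    ∀ᶠ z in nhdsWithin c (Set.Iio c), f c < f z := by
  have h := hasDerivAt_iff_tendsto_slope.1 hf
  have h2 : ∀ᶠ z in nhdsWithin c {c}ᶜ, slope f c z < 0 := h.eventually (Iio_mem_nhds hneg)
  have h3 : nhdsWithin c (Set.Iio c) ≤ nhdsWithin c {c}ᶜ :=
    nhdsWithin_mono _ (fun x hx => ne_of_lt hx)
  filter_upwards [h3 h2, self_mem_nhdsWithin] with z hz hz2
  rw [slope_def_field] at hz
  rcases div_neg_iff.1 hz with ⟨h4, h5⟩ | ⟨h4, h5⟩
  · linarith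
  · simp only [Set.mem_Iio] at hz2; linarith

lemma le_arccos {v w : ℝ} (hv : -1 ≤ v) (hw0 : 0 ≤ w) (hwπ : w ≤ π) (h : v ≤ Real.cos w) :
    w ≤ Real.arccos v := by
  by_contra hc
  push_neg at hc
  have h1 : Real.cos w < Real.cos (Real.arccos v) :=
    Real.cos_lt_cos_of_nonneg_of_le_pi (Real.arccos_nonneg v) hwπ hc
  rw [Real.cos_arccos hv (by nlinarith [Real.cos_le_one w])] at h1
  linarith


section ThreeVar

variable {a b c : ℝ}

lemma gF_c (ha : 0 < a) (hab : a ≤ b) (hbc : b < c) (hcπ : c ≤ π) :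
    gF a b c c = Real.cos ((b-a)/2) := by
  have hπ := Real.pi_pos
  have hP : 0 < Real.sin ((a+b)/2) :=
    Real.sin_pos_of_pos_of_lt_pi (by linarith) (by linarith)
  simp only [gF]
  rw [show a+b+c-c = a+b by ring,
      show Real.sin a + Real.sin b + Real.sin c - Real.sin c = Real.sin a + Real.sin b by ring,
      sinsum a b, show (a-b)/2 = -((b-a)/2) by ring, Real.cos_neg]
  field_simp

lemma gF_hasDeriv (ha : 0 < a) (hab : a ≤ b) (hbc : b < c) (hcπ : c ≤ π) :
    HasDerivAt (gF a b c)
      ((Real.cos a + Real.cos b - 2*Real.cos c) / (4 * Real.sin ((a+b)/2))) c := by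
  have hπ := Real.pi_pos
  have hP : 0 < Real.sin ((a+b)/2) :=
    Real.sin_pos_of_pos_of_lt_pi (by linarith) (by linarith)
  have e : a+b+c-c = a+b := by ring
  have hinner : HasDerivAt (fun w : ℝ => (a+b+c-w)/2) (-(1:ℝ)/2) c := by
    simpa using ((hasDerivAt_id c).const_sub (a+b+c)).div_const 2
  have hD : HasDerivAt (fun w : ℝ => 2 * Real.sin ((a+b+c-w)/2))
      (2 * (Real.cos ((a+b)/2) * (-(1:ℝ)/2))) c := by
    have h0 := (hinner.sin).const_mul (2:ℝ)
    rw [e] at h0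
    convert h0 using 1
  have hN : HasDerivAt (fun w : ℝ => Real.sin a + Real.sin b + Real.sin c - Real.sin w)
      (-Real.cos c) c := by
    simpa using (Real.hasDerivAt_sin c).const_sub (Real.sin a + Real.sin b + Real.sin c)
  have hDne : (fun w : ℝ => 2 * Real.sin ((a+b+c-w)/2)) c ≠ 0 := by
    simp only [e]; positivity
  have h0 := hN.div hD hDne
  have hq2 : Real.sin a + Real.sin b + Real.sin c - Real.sin c
      = 2 * Real.sin ((a+b)/2) * Real.cos ((a-b)/2) := by rw [← sinsum]; ring
  have key : 2 * Real.cos ((a-b)/2) * Real.cos ((a+b)/2) = Real.cos b + Real.cos a := by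
    rw [Real.two_mul_cos_mul_cos, show (a-b)/2 - (a+b)/2 = -b by ring,
        show (a-b)/2 + (a+b)/2 = a by ring, Real.cos_neg]
  refine h0.congr_deriv (Eq.symm ?_)
  simp only [e]
  rw [hq2]
  field_simp
  linear_combination (-2) * key

lemma sqrt_gc (ha : 0 < a) (hab : a ≤ b) (hbc : b < c) (hcπ : c ≤ π) :
    Real.sqrt ((1 + gF a b c c)/2) = Real.cos ((b-a)/4) := by
  have hπ := Real.pi_pos
  rw [gF_c ha hab hbc hcπ, ← Real.cos_half (by linarith) (by linarith),
      show ((b-a)/2)/2 = (b-a)/4 by ring]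

lemma PhiF_hasDeriv (ha : 0 < a) (hab : a ≤ b) (hbc : b < c) (hcπ : c ≤ π) :
    ∃ E : ℝ, E < 0 ∧ HasDerivAt (PhiF a b c) E c := by
  have hπ := Real.pi_pos
  have hb0 : 0 < b := lt_of_lt_of_le ha hab
  have hbπ : b < π := lt_of_lt_of_le hbc hcπ
  have hP : 0 < Real.sin ((a+b)/2) :=
    Real.sin_pos_of_pos_of_lt_pi (by linarith) (by linarith)
  have hgc0 : 0 ≤ gF a b c c := by
    rw [gF_c ha hab hbc hcπ]
    exact Real.cos_nonneg_of_mem_Icc ⟨by linarith, by linarith⟩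
  have h1g : (0:ℝ) < (1 + gF a b c c)/2 := by linarith
  set G : ℝ := (Real.cos a + Real.cos b - 2*Real.cos c) / (4 * Real.sin ((a+b)/2)) with hGdef
  have hgD := gF_hasDeriv ha hab hbc hcπ
  have e4 : (a+b+c-c)/4 = (a+b)/4 := by ring
  have h1' : HasDerivAt (fun w : ℝ => Real.sin (w/2)) (Real.cos (c/2) * (1/2)) c := by
    have := ((hasDerivAt_id c).div_const 2).sin
    simpa using this
  have hinner : HasDerivAt (fun w : ℝ => (a+b+c-w)/4) (-(1:ℝ)/4) c := by
    simpa using ((hasDerivAt_id c).const_sub (a+b+c)).div_const 4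
  have hquarter : HasDerivAt (fun w : ℝ => 2 * Real.sin ((a+b+c-w)/4))
      (2 * (Real.cos ((a+b)/4) * (-(1:ℝ)/4))) c := by
    have h0 := (hinner.sin).const_mul (2:ℝ)
    rw [e4] at h0
    convert h0 using 1
  have h3' : HasDerivAt (fun w : ℝ => (1 + gF a b c w)/2) (G/2) c := by
    simpa using ((hgD.const_add 1).div_const 2)
  have h4' : HasDerivAt (fun w : ℝ => Real.sqrt ((1 + gF a b c w)/2))
      ((G/2) / (2 * Real.sqrt ((1 + gF a b c c)/2))) c := h3'.sqrt (ne_of_gt h1g)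
  have hPhiD : HasDerivAt (PhiF a b c)
      (Real.cos (c/2) * (1/2) +
        ((2 * (Real.cos ((a+b)/4) * (-(1:ℝ)/4))) * Real.sqrt ((1 + gF a b c c)/2) +
          (2 * Real.sin ((a+b+c-c)/4)) * ((G/2) / (2 * Real.sqrt ((1 + gF a b c c)/2))))) c := by
    exact h1'.add (hquarter.mul h4')
  refine ⟨_, ?_, hPhiD⟩
  -- now the sign
  rw [sqrt_gc ha hab hbc hcπ, e4]
  have hcv : 0 < Real.cos ((b-a)/4) :=
    Real.cos_pos_of_mem_Ioo ⟨by linarith, by linarith⟩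
  have hcu : 0 < Real.cos ((a+b)/4) :=
    Real.cos_pos_of_mem_Ioo ⟨by linarith, by linarith⟩
  have hsu : 0 < Real.sin ((a+b)/4) :=
    Real.sin_pos_of_pos_of_lt_pi (by linarith) (by linarith)
  have hAC : Real.cos (c/2) < Real.cos (a/2) :=
    Real.cos_lt_cos_of_nonneg_of_le_pi (by linarith) (by linarith) (by linarith)
  have hBC : Real.cos (c/2) < Real.cos (b/2) :=
    Real.cos_lt_cos_of_nonneg_of_le_pi (by linarith) (by linarith) (by linarith)
  have idA : Real.cos (a/2)
      = Real.cos ((a+b)/4) * Real.cos ((b-a)/4) + Real.sin ((a+b)/4) * Real.sin ((b-a)/4) := by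
    rw [← Real.cos_sub]; congr 1; ring
  have idB : Real.cos (b/2)
      = Real.cos ((a+b)/4) * Real.cos ((b-a)/4) - Real.sin ((a+b)/4) * Real.sin ((b-a)/4) := by
    rw [← Real.cos_add]; congr 1; ring
  have idS : Real.sin ((a+b)/2) = 2 * Real.sin ((a+b)/4) * Real.cos ((a+b)/4) := by
    rw [show (a+b)/2 = 2*((a+b)/4) by ring, Real.sin_two_mul]
  have idca : Real.cos a = 2 * Real.cos (a/2)^2 - 1 := by
    have := Real.cos_two_mul (a/2); rw [show 2*(a/2) = a by ring] at this; exact this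
  have idcb : Real.cos b = 2 * Real.cos (b/2)^2 - 1 := by
    have := Real.cos_two_mul (b/2); rw [show 2*(b/2) = b by ring] at this; exact this
  have idcc : Real.cos c = 2 * Real.cos (c/2)^2 - 1 := by
    have := Real.cos_two_mul (c/2); rw [show 2*(c/2) = c by ring] at this; exact this
  have hABpos : 0 < Real.cos (a/2) + Real.cos (b/2) := by
    have : 0 ≤ Real.cos (c/2) := Real.cos_nonneg_of_mem_Icc ⟨by linarith, by linarith⟩
    linarith
  have hE : Real.cos (c/2) * (1/2) +
        ((2 * (Real.cos ((a+b)/4) * (-(1:ℝ)/4))) * Real.cos ((b-a)/4) +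
          (2 * Real.sin ((a+b)/4)) * ((G/2) / (2 * Real.cos ((b-a)/4))))
      = -((Real.cos (a/2) - Real.cos (c/2)) * (Real.cos (b/2) - Real.cos (c/2)))
          / (2 * (Real.cos (a/2) + Real.cos (b/2))) := by
    rw [hGdef, idca, idcb, idcc, idS, idA, idB]
    have h2 : Real.cos ((a+b)/4) * Real.cos ((b-a)/4) + Real.sin ((a+b)/4) * Real.sin ((b-a)/4)
        + (Real.cos ((a+b)/4) * Real.cos ((b-a)/4) - Real.sin ((a+b)/4) * Real.sin ((b-a)/4))
        = 2 * (Real.cos ((a+b)/4) * Real.cos ((b-a)/4)) := by ring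
    field_simp
    ring
  rw [hE]
  have hnum : 0 < (Real.cos (a/2) - Real.cos (c/2)) * (Real.cos (b/2) - Real.cos (c/2)) :=
    mul_pos (by linarith) (by linarith)
  have := div_pos hnum (by linarith : (0:ℝ) < 2 * (Real.cos (a/2) + Real.cos (b/2)))
  rw [neg_div]
  linarith

lemma psi2_hasDeriv (ha : 0 < a) (hab : a ≤ b) (hbc : b < c) (hcπ : c ≤ π) :
    ∃ E : ℝ, E < 0 ∧
      HasDerivAt (fun w => Real.cos ((b-a+c-w)/2) - gF a b c w) E c := by
  have hπ := Real.pi_pos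
  have hb0 : 0 < b := lt_of_lt_of_le ha hab
  have hbπ : b < π := lt_of_lt_of_le hbc hcπ
  have hP : 0 < Real.sin ((a+b)/2) :=
    Real.sin_pos_of_pos_of_lt_pi (by linarith) (by linarith)
  have hinner : HasDerivAt (fun w : ℝ => (b-a+c-w)/2) (-(1:ℝ)/2) c := by
    simpa using ((hasDerivAt_id c).const_sub (b-a+c)).div_const 2
  have hcos : HasDerivAt (fun w : ℝ => Real.cos ((b-a+c-w)/2))
      (-Real.sin ((b-a)/2) * (-(1:ℝ)/2)) c := by
    have h0 := hinner.cos
    rw [show b-a+c-c = b-a by ring] at h0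
    exact h0
  refine ⟨_, ?_, hcos.sub (gF_hasDeriv ha hab hbc hcπ)⟩
  have key2 : 2 * Real.sin ((a+b)/2) * Real.sin ((b-a)/2) = Real.cos a - Real.cos b := by
    rw [Real.two_mul_sin_mul_sin, show (a+b)/2 - (b-a)/2 = a by ring,
        show (a+b)/2 + (b-a)/2 = b by ring]
  have hcc : Real.cos c < Real.cos b :=
    Real.cos_lt_cos_of_nonneg_of_le_pi (by linarith) hcπ hbc
  have heq : -Real.sin ((b-a)/2) * (-(1:ℝ)/2)
        - (Real.cos a + Real.cos b - 2*Real.cos c) / (4 * Real.sin ((a+b)/2))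
      = (2 * Real.sin ((a+b)/2) * Real.sin ((b-a)/2)
          - (Real.cos a + Real.cos b - 2*Real.cos c)) / (4 * Real.sin ((a+b)/2)) := by
    field_simp; ring
  rw [heq, key2]
  apply div_neg_of_neg_of_pos (by linarith) (by linarith)

lemma psi3_hasDeriv (ha : 0 < a) (hab : a ≤ b) (hbc : b < c) (hcπ : c ≤ π) :
    ∃ E : ℝ, E < 0 ∧
      HasDerivAt (fun w => Real.cos ((b-a-c+w)/2) - gF a b c w) E c := by
  have hπ := Real.pi_pos
  have hb0 : 0 < b := lt_of_lt_of_le ha hab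
  have hbπ : b < π := lt_of_lt_of_le hbc hcπ
  have hP : 0 < Real.sin ((a+b)/2) :=
    Real.sin_pos_of_pos_of_lt_pi (by linarith) (by linarith)
  have hinner : HasDerivAt (fun w : ℝ => (b-a-c+w)/2) ((1:ℝ)/2) c := by
    simpa using ((hasDerivAt_id c).const_add (b-a-c)).div_const 2
  have hcos : HasDerivAt (fun w : ℝ => Real.cos ((b-a-c+w)/2))
      (-Real.sin ((b-a)/2) * ((1:ℝ)/2)) c := by
    have h0 := hinner.cos
    rw [show b-a-c+c = b-a by ring] at h0
    exact h0
  refine ⟨_, ?_, hcos.sub (gF_hasDeriv ha hab hbc hcπ)⟩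
  have hsba : 0 ≤ Real.sin ((b-a)/2) :=
    Real.sin_nonneg_of_nonneg_of_le_pi (by linarith) (by linarith)
  have hcc : Real.cos c < Real.cos b :=
    Real.cos_lt_cos_of_nonneg_of_le_pi (by linarith) hcπ hbc
  have hca : Real.cos b ≤ Real.cos a := by
    rcases eq_or_lt_of_le hab with h | h
    · rw [h]
    · exact (Real.cos_lt_cos_of_nonneg_of_le_pi ha.le (by linarith) h).le
  have hG0 : 0 < (Real.cos a + Real.cos b - 2*Real.cos c) / (4 * Real.sin ((a+b)/2)) :=
    div_pos (by linarith) (by linarith)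
  linarith [mul_nonneg hsba (by norm_num : (0:ℝ) ≤ 1/2)]

lemma gF_contAt (ha : 0 < a) (hab : a ≤ b) (hbc : b < c) (hcπ : c ≤ π) :
    ContinuousAt (gF a b c) c := by
  have hπ := Real.pi_pos
  have hb0 : 0 < b := lt_of_lt_of_le ha hab
  have hbπ : b < π := lt_of_lt_of_le hbc hcπ
  have hP : 0 < Real.sin ((a+b)/2) :=
    Real.sin_pos_of_pos_of_lt_pi (by linarith) (by linarith)
  unfold gF
  apply ContinuousAt.div (by fun_prop) (by fun_prop)
  rw [show a+b+c-c = a+b by ring]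
  positivity

lemma three_var (ha : 0 < a) (hab : a ≤ b) (hbc : b < c) (hcπ : c ≤ π) :
    ∃ x y z : ℝ, 0 ≤ x ∧ x ≤ a ∧ b ≤ y ∧ y ≤ z ∧ z ≤ c ∧
      x + y + z = a + b + c ∧
      Real.sin x + Real.sin y + Real.sin z = Real.sin a + Real.sin b + Real.sin c ∧
      Real.sin (a/2) + Real.sin (b/2) + Real.sin (c/2)
        < Real.sin (x/2) + Real.sin (y/2) + Real.sin (z/2) := by
  have hπ := Real.pi_pos
  have hb0 : 0 < b := lt_of_lt_of_le ha hab
  have hbπ : b < π := lt_of_lt_of_le hbc hcπ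
  have hc0 : 0 < c := lt_trans hb0 hbc
  have hP : 0 < Real.sin ((a+b)/2) :=
    Real.sin_pos_of_pos_of_lt_pi (by linarith) (by linarith)
  have hgcont := gF_contAt ha hab hbc hcπ
  have hgcval := gF_c ha hab hbc hcπ
  have hgc0 : 0 ≤ gF a b c c := by
    rw [hgcval]; exact Real.cos_nonneg_of_mem_Icc ⟨by linarith, by linarith⟩
  -- E1
  obtain ⟨E, hEneg, hPhiD⟩ := PhiF_hasDeriv ha hab hbc hcπ
  have E1 := deriv_neg_eventually_gt hPhiD hEneg
  -- E2
  obtain ⟨E2v, hE2neg, hpsi2D⟩ := psi2_hasDeriv ha hab hbc hcπ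
  have E2 := deriv_neg_eventually_gt hpsi2D hE2neg
  -- E3
  obtain ⟨E3v, hE3neg, hpsi3D⟩ := psi3_hasDeriv ha hab hbc hcπ
  have E3 := deriv_neg_eventually_gt hpsi3D hE3neg
  -- E4
  have E4 : ∀ᶠ z in nhdsWithin c (Set.Iio c), -1 < gF a b c z :=
    (hgcont.eventually_const_lt (by linarith)).filter_mono nhdsWithin_le_nhds
  -- E5
  have hsinca : ContinuousAt (fun z : ℝ => Real.sin ((a+b+c-z)/2)) c := by fun_prop
  have E5 : ∀ᶠ z in nhdsWithin c (Set.Iio c), 0 < Real.sin ((a+b+c-z)/2) := by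
    have h0 : (0:ℝ) < Real.sin ((a+b+c-c)/2) := by
      rw [show a+b+c-c = a+b by ring]; exact hP
    exact (hsinca.eventually_const_lt h0).filter_mono nhdsWithin_le_nhds
  -- E6, E7
  have harccos : ContinuousAt (fun z : ℝ => Real.arccos (gF a b c z)) c :=
    Real.continuous_arccos.continuousAt.comp hgcont
  have harcc : Real.arccos (gF a b c c) = (b-a)/2 := by
    rw [hgcval]; exact Real.arccos_cos (by linarith) (by linarith)
  have hxca : ContinuousAt (fun z : ℝ => (a+b+c-z)/2 - Real.arccos (gF a b c z)) c :=
    (by fun_prop : ContinuousAt (fun z : ℝ => (a+b+c-z)/2) c).sub harccos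
  have E6 : ∀ᶠ z in nhdsWithin c (Set.Iio c),
      0 < (a+b+c-z)/2 - Real.arccos (gF a b c z) := by
    have h0 : (0:ℝ) < (a+b+c-c)/2 - Real.arccos (gF a b c c) := by
      rw [harcc]; linarith
    exact (hxca.eventually_const_lt h0).filter_mono nhdsWithin_le_nhds
  have hyca : ContinuousAt (fun z : ℝ => (a+b+c-z)/2 + Real.arccos (gF a b c z) - z) c :=
    ((by fun_prop : ContinuousAt (fun z : ℝ => (a+b+c-z)/2) c).add harccos).sub
      continuousAt_id
  have E7 : ∀ᶠ z in nhdsWithin c (Set.Iio c),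
      (a+b+c-z)/2 + Real.arccos (gF a b c z) - z < 0 := by
    have h0 : (a+b+c-c)/2 + Real.arccos (gF a b c c) - c < 0 := by
      rw [harcc]; linarith
    exact (hyca.eventually_lt_const h0).filter_mono nhdsWithin_le_nhds
  -- E8
  have E8 : ∀ᶠ z in nhdsWithin c (Set.Iio c), 0 < z :=
    (eventually_gt_nhds hc0).filter_mono nhdsWithin_le_nhds
  -- E9
  have E9 : ∀ᶠ z in nhdsWithin c (Set.Iio c), z < c := by
    filter_upwards [self_mem_nhdsWithin] with z hz
    exact hz
  obtain ⟨z, h1, h2, h3, h4, h5, h6, h7, h8, h9⟩ :=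
    (E1.and (E2.and (E3.and (E4.and (E5.and (E6.and (E7.and (E8.and E9)))))))).exists
  -- unpack values at c
  have hpsi2c : Real.cos ((b-a+c-c)/2) - gF a b c c = 0 := by
    rw [show b-a+c-c = b-a by ring, hgcval]; ring
  have hpsi3c : Real.cos ((b-a-c+c)/2) - gF a b c c = 0 := by
    rw [show b-a-c+c = b-a by ring, hgcval]; ring
  rw [hpsi2c] at h2
  rw [hpsi3c] at h3
  -- definitions
  set d := Real.arccos (gF a b c z) with hd
  set x := (a+b+c-z)/2 - d with hx
  set y := (a+b+c-z)/2 + d with hy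
  have hgz1 : gF a b c z ≤ Real.cos ((b-a+c-z)/2) := by linarith
  have hgzle1 : gF a b c z ≤ 1 := le_trans hgz1 (Real.cos_le_one _)
  have hgzm1 : (-1:ℝ) ≤ gF a b c z := le_of_lt h4
  have hcosd : Real.cos d = gF a b c z := Real.cos_arccos hgzm1 hgzle1
  have hd0 : 0 ≤ d := Real.arccos_nonneg _
  have hdπ : d ≤ π := Real.arccos_le_pi _
  have hzc : z < c := h9
  have hz0 : 0 < z := h8
  -- x ≤ a
  have hw2a : 0 ≤ (b-a+c-z)/2 := by linarith
  have hw2b : (b-a+c-z)/2 ≤ π := by linarith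
  have hdw2 : (b-a+c-z)/2 ≤ d := le_arccos hgzm1 hw2a hw2b hgz1
  have hxa : x ≤ a := by rw [hx]; linarith
  -- b ≤ y
  have hby : b ≤ y := by
    rcases le_or_gt (b - a - c + z) 0 with h | h
    · rw [hy]; linarith
    · have hw3a : 0 ≤ (b-a-c+z)/2 := by linarith
      have hw3b : (b-a-c+z)/2 ≤ π := by linarith
      have hgz3 : gF a b c z ≤ Real.cos ((b-a-c+z)/2) := by linarith
      have := le_arccos hgzm1 hw3a hw3b hgz3
      rw [hy]; linarith
  have hx0 : 0 ≤ x := le_of_lt h6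
  have hyz : y ≤ z := by linarith [h7]
  have hsinz : 0 < Real.sin ((a+b+c-z)/2) := h5
  -- sum
  have hsum : x + y + z = a + b + c := by rw [hx, hy]; ring
  -- sin sum
  have hsinxy : Real.sin x + Real.sin y
      = 2 * Real.sin ((a+b+c-z)/2) * gF a b c z := by
    rw [sinsum x y, show (x+y)/2 = (a+b+c-z)/2 by rw [hx, hy]; ring,
        show (x-y)/2 = -d by rw [hx, hy]; ring, Real.cos_neg, hcosd]
  have hgzval : 2 * Real.sin ((a+b+c-z)/2) * gF a b c z
      = Real.sin a + Real.sin b + Real.sin c - Real.sin z := by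
    unfold gF
    field_simp
  have hsinsum : Real.sin x + Real.sin y + Real.sin z
      = Real.sin a + Real.sin b + Real.sin c := by
    rw [hsinxy, hgzval]; ring
  -- objective
  have hcoshalf : Real.cos (d/2) = Real.sqrt ((1 + gF a b c z)/2) := by
    rw [Real.cos_half (by linarith) (by linarith), hcosd]
  have hobjxy : Real.sin (x/2) + Real.sin (y/2)
      = 2 * Real.sin ((a+b+c-z)/4) * Real.sqrt ((1 + gF a b c z)/2) := by
    rw [sinsum (x/2) (y/2), show (x/2+y/2)/2 = (a+b+c-z)/4 by rw [hx, hy]; ring,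
        show (x/2-y/2)/2 = -(d/2) by rw [hx, hy]; ring, Real.cos_neg, hcoshalf]
  have hPhiz : Real.sin (x/2) + Real.sin (y/2) + Real.sin (z/2) = PhiF a b c z := by
    rw [hobjxy]; unfold PhiF; ring
  have hPhic : PhiF a b c c = Real.sin (a/2) + Real.sin (b/2) + Real.sin (c/2) := by
    unfold PhiF
    rw [show (1 + gF a b c c)/2 = (1 + gF a b c c)/2 from rfl]
    have := sqrt_gc ha hab hbc hcπ
    rw [this, show (a+b+c-c)/4 = (a+b)/4 by ring]
    rw [sinsum (a/2) (b/2), show (a/2+b/2)/2 = (a+b)/4 by ring,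
        show (a/2-b/2)/2 = -((b-a)/4) by ring, Real.cos_neg]
    ring
  refine ⟨x, y, z, hx0, hxa, hby, hyz, le_of_lt hzc, hsum, hsinsum, ?_⟩
  rw [hPhiz, ← hPhic]
  exact h1

end ThreeVar

section MainHelpers

lemma sum_comp_update {n : ℕ} (F : ℝ → ℝ) (g : Fin n → ℝ) (p : Fin n) (v : ℝ) :
    ∑ i, F (Function.update g p v i) = ∑ i, F (g i) + F v - F (g p) := by
  have h : ∀ i, F (Function.update g p v i) = Function.update (fun i => F (g i)) p (F v) i := by
    intro i
    by_cases hi : i = p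
    · subst hi; simp
    · simp [Function.update_of_ne hi]
  simp_rw [h]
  rw [Finset.sum_update_of_mem (Finset.mem_univ p)]
  rw [Finset.sum_eq_sum_sdiff_singleton_add (Finset.mem_univ p) (fun i => F (g i))]
  ring

lemma exists_consec {n : ℕ} (θ : Fin n → ℝ)
    {i j : Fin n} (hij : i < j) (hlt : θ i < θ j) :
    ∃ k : ℕ, ∃ hk : k + 1 < n, i.1 ≤ k ∧ θ ⟨k, Nat.lt_of_succ_lt hk⟩ < θ ⟨k+1, hk⟩ := by
  by_contra h
  push_neg at h
  have claim : ∀ m : ℕ, ∀ hm : i.1 + m < n, θ ⟨i.1 + m, hm⟩ ≤ θ i := by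
    intro m
    induction m with
    | zero => intro hm; exact le_of_eq (congrArg θ (by ext; simp))
    | succ m ih =>
      intro hm
      have hm' : i.1 + m < n := by omega
      have h1 : θ ⟨i.1 + m + 1, by omega⟩ ≤ θ ⟨i.1 + m, hm'⟩ := h (i.1 + m) (by omega) (by omega)
      exact le_trans (by exact h1) (ih hm')
  have hj : i.1 + (j.1 - i.1) < n := by omega
  have := claim (j.1 - i.1) hj
  have hji : (⟨i.1 + (j.1 - i.1), hj⟩ : Fin n) = j := by
    ext; simp; omega
  rw [hji] at this
  linarith

end MainHelpers

theorem n_angle_maximizer (n : ℕ) (hn : 3 ≤ n) (S T : ℝ)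
    (hS : S ∈ Set.Ioc 0 (2 * π)) (hT : T ∈ Set.Ioc 0 (n * Real.sin (S / n)))
    (θ : Fin n → ℝ)
    (hrange : ∀ i, θ i ∈ Set.Icc 0 π)
    (hmono : ∀ i j : Fin n, i ≤ j → θ i ≤ θ j)
    (hsum : ∑ i, θ i = S) (hsin : ∑ i, Real.sin (θ i) = T)
    (hmax : ∀ φ : Fin n → ℝ, (∀ i, φ i ∈ Set.Icc 0 π) →
      (∀ i j : Fin n, i ≤ j → φ i ≤ φ j) →
      ∑ i, φ i = S → ∑ i, Real.sin (φ i) = T →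
      ∑ i, Real.sin (φ i / 2) ≤ ∑ i, Real.sin (θ i / 2)) :
    θ ⟨0, by omega⟩ = 0 ∨ ∀ i j : Fin n, 1 ≤ (i : ℕ) → 1 ≤ (j : ℕ) → θ i = θ j := by
  by_contra hcon
  push_neg at hcon
  obtain ⟨h0, i, j, hi1, hj1, hne⟩ := hcon
  have hij : i ≠ j := fun h => hne (congrArg θ h)
  obtain ⟨i0, j0, hi0, hlt, h1i⟩ : ∃ i0 j0 : Fin n, i0 < j0 ∧ θ i0 < θ j0 ∧ 1 ≤ (i0:ℕ) := by
    rcases lt_or_gt_of_ne hij with h | h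
    · exact ⟨i, j, h, lt_of_le_of_ne (hmono i j h.le) hne, hi1⟩
    · exact ⟨j, i, h, lt_of_le_of_ne (hmono j i h.le) (Ne.symm hne), hj1⟩
  obtain ⟨k, hk, hik, hklt⟩ := exists_consec θ hi0 hlt
  have hk1 : 1 ≤ k := le_trans h1i hik
  obtain ⟨p, hp1⟩ : ∃ p : Fin n, (p:ℕ) = 0 := ⟨⟨0, by omega⟩, rfl⟩
  obtain ⟨r, hr1⟩ : ∃ r : Fin n, (r:ℕ) = k := ⟨⟨k, by omega⟩, rfl⟩
  obtain ⟨t, ht1⟩ : ∃ t : Fin n, (t:ℕ) = k + 1 := ⟨⟨k+1, hk⟩, rfl⟩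
  have h0p : θ p ≠ 0 := by
    have hpe : p = ⟨0, by omega⟩ := Fin.ext hp1
    rw [hpe]; exact h0
  have ha : 0 < θ p := lt_of_le_of_ne (hrange p).1 (Ne.symm h0p)
  have hab : θ p ≤ θ r := hmono p r (by rw [Fin.le_def, hp1]; omega)
  have hbc : θ r < θ t := by
    convert hklt using 2 <;> ext <;> simp [hr1, ht1]
  have hcπ : θ t ≤ π := (hrange t).2
  obtain ⟨x, y, z, hx0, hxa, hby, hyz, hzc, hsum3, hsin3, hobj3⟩ := three_var ha hab hbc hcπ
  have hpr : p ≠ r := by intro h; have := congrArg Fin.val h; omega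
  have hpt : p ≠ t := by intro h; have := congrArg Fin.val h; omega
  have hrt : r ≠ t := by intro h; have := congrArg Fin.val h; omega
  set φ : Fin n → ℝ :=
    Function.update (Function.update (Function.update θ p x) r y) t z with hφ
  have key : ∀ w : Fin n, (φ w = x ∧ w = p) ∨ (φ w = y ∧ w = r) ∨ (φ w = z ∧ w = t) ∨
      (φ w = θ w ∧ w ≠ p ∧ w ≠ r ∧ w ≠ t) := by
    intro w
    by_cases h1 : w = t
    · right; right; left
      refine ⟨?_, h1⟩
      subst h1; simp [hφ]
    · by_cases h2 : w = r
      · right; left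
        refine ⟨?_, h2⟩
        subst h2
        simp [hφ, Function.update_of_ne h1]
      · by_cases h3 : w = p
        · left
          refine ⟨?_, h3⟩
          subst h3
          simp [hφ, Function.update_of_ne h1, Function.update_of_ne h2]
        · right; right; right
          refine ⟨?_, h3, h2, h1⟩
          simp [hφ, Function.update_of_ne h1, Function.update_of_ne h2,
            Function.update_of_ne h3]
  have hθpv : ∀ v : Fin n, θ p ≤ θ v := fun v => hmono p v (by rw [Fin.le_def, hp1]; omega)
  have hrangeφ : ∀ i, φ i ∈ Set.Icc 0 π := by
    intro w
    rcases key w with ⟨hw, _⟩ | ⟨hw, _⟩ | ⟨hw, _⟩ | ⟨hw, _⟩ <;> rw [hw]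
    · exact ⟨hx0, le_trans hxa (le_trans hab (le_trans hbc.le hcπ))⟩
    · exact ⟨le_trans (hrange r).1 hby, le_trans hyz (le_trans hzc hcπ)⟩
    · exact ⟨le_trans (le_trans (hrange r).1 hby) hyz, le_trans hzc hcπ⟩
    · exact hrange w
  have hmonoφ : ∀ u v : Fin n, u ≤ v → φ u ≤ φ v := by
    intro u v huv
    have huv' : (u:ℕ) ≤ (v:ℕ) := huv
    rcases key u with ⟨hu, hu'⟩ | ⟨hu, hu'⟩ | ⟨hu, hu'⟩ | ⟨hu, hu1, hu2, hu3⟩ <;>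
      rcases key v with ⟨hv, hv'⟩ | ⟨hv, hv'⟩ | ⟨hv, hv'⟩ | ⟨hv, hv1, hv2, hv3⟩ <;>
      rw [hu, hv] <;>
      [skip; skip; skip; skip; skip; skip; skip; skip; skip; skip; skip; skip; skip]
    · linarith [hab]
    · linarith [hab]
    · exact le_trans hxa (hθpv v)
    · exfalso; rw [hu', hv'] at huv'; omega
    · exact hyz
    · have hvr : (v:ℕ) ≠ k := fun h => hv2 (Fin.ext (by rw [h, hr1]))
      have hu'' : (u:ℕ) = k := by rw [hu']; exact hr1
      have htv : t ≤ v := by rw [Fin.le_def, ht1]; omega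
      linarith [hmono t v htv]
    · exfalso; rw [hu', hv'] at huv'; omega
    · exfalso; rw [hu', hv'] at huv'; omega
    · have hvt : (v:ℕ) ≠ k + 1 := fun h => hv3 (Fin.ext (by rw [h, ht1]))
      have hu'' : (u:ℕ) = k + 1 := by rw [hu']; exact ht1
      have htv : t ≤ v := by rw [Fin.le_def, ht1]; omega
      linarith [hmono t v htv]
    · exfalso
      have hup : (u:ℕ) ≠ 0 := fun h => hu1 (Fin.ext (by rw [h, hp1]))
      rw [hv'] at huv'
      omega
    · have hur : u ≤ r := by rw [← hv']; exact huv
      linarith [hmono u r hur]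
    · have hunt : (u:ℕ) ≠ k + 1 := fun h => hu3 (Fin.ext (by rw [h, ht1]))
      rw [hv', ht1] at huv'
      have hur : u ≤ r := by rw [Fin.le_def, hr1]; omega
      linarith [hmono u r hur]
    · exact hmono u v huv
  have hsums : ∀ F : ℝ → ℝ, ∑ i, F (φ i)
      = ∑ i, F (θ i) + (F x + F y + F z) - (F (θ p) + F (θ r) + F (θ t)) := by
    intro F
    rw [hφ, sum_comp_update F _ t z, sum_comp_update F _ r y, sum_comp_update F _ p x,
      Function.update_of_ne (Ne.symm hrt), Function.update_of_ne (Ne.symm hpt),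
      Function.update_of_ne (Ne.symm hpr)]
    ring
  have hsumφ : ∑ i, φ i = S := by
    have h := hsums (fun w => w)
    rw [h, hsum]
    linarith [hsum3]
  have hsinφ : ∑ i, Real.sin (φ i) = T := by
    have h := hsums Real.sin
    rw [h, hsin]
    linarith [hsin3]
  have hobjφ : ∑ i, Real.sin (θ i / 2) < ∑ i, Real.sin (φ i / 2) := by
    have h := hsums (fun w => Real.sin (w / 2))
    rw [h]
    linarith [hobj3]
  linarith [hmax φ hrangeφ hmonoφ hsumφ hsinφ]
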